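/- Let G = ⟨a,b,c ∣ aba⁻¹b⁻¹⟩ (the free product ℤ² * ℤ presented on generators a, b, c with the single relator [a,b]) and let Σ be the six-letter alphabet consisting of the images in G of a, b, c and their inverses. Let h_n be the number of geodesic words of length n over Σ in which every occurrence of a letter from {a, a⁻¹, b, b⁻¹} that is not the last letter of the word is immediately followed by c or c⁻¹. Then h₀ = 1, h₁ = 6, h₂ = 18, and h_n = h_{n−1} + 8·h_{n−2} for all n ≥ 3. Equivalently, the generating function ∑ h_n tⁿ equals (4t² + 5t + 1)/(1 − t − 8t²). -/

import Mathlib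

/-! The group `G = ⟨a,b,c ∣ aba⁻¹b⁻¹⟩ ≅ ℤ² * ℤ`, its six-letter alphabet of
generators and inverses, word length, and geodesic words. -/

/-- The single relator `[a,b] = a b a⁻¹ b⁻¹` in the free group on `a,b,c`. -/
def theRels : Set (FreeGroup (Fin 3)) :=
  {FreeGroup.of 0 * FreeGroup.of 1 * (FreeGroup.of 0)⁻¹ * (FreeGroup.of 1)⁻¹}

/-- The group `G = ⟨a,b,c ∣ aba⁻¹b⁻¹⟩`. -/
abbrev Gp : Type := PresentedGroup theRels

/-- The six-letter alphabet `Σ ⊆ G`: the images of `a, b, c` and their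
inverses. -/
def letters : Set Gp :=
  {x | ∃ i : Fin 3, x = PresentedGroup.of i ∨ x = (PresentedGroup.of i)⁻¹}

/-- The word length `|g|`: the minimum length of a list over `Σ` whose product
is `g`. -/
noncomputable def wl (g : Gp) : ℕ :=
  sInf {n | ∃ l : List Gp, (∀ x ∈ l, x ∈ letters) ∧ l.prod = g ∧ l.length = n}

/-- A word over `Σ` is geodesic if the word length of its product equals its
length. -/
def IsGeodesicWord (w : List Gp) : Prop :=
  (∀ x ∈ w, x ∈ letters) ∧ wl w.prod = w.length

/-- The sub-alphabet `{a, a⁻¹, b, b⁻¹}`. -/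
def abLetters : Set Gp :=
  {x | ∃ i : Fin 2, x = PresentedGroup.of (Fin.castSucc i) ∨
    x = (PresentedGroup.of (Fin.castSucc i))⁻¹}

/-- The sub-alphabet `{c, c⁻¹}`. -/
def cLetters : Set Gp :=
  {x | x = PresentedGroup.of (2 : Fin 3) ∨ x = (PresentedGroup.of (2 : Fin 3))⁻¹}

/-- Every occurrence of a letter from `{a, a⁻¹, b, b⁻¹}` that is not the last
letter of `w` is immediately followed by `c` or `c⁻¹`. -/
def ABFollowedByC (w : List Gp) : Prop :=
  ∀ k : ℕ, k + 1 < w.length → w.getD k 1 ∈ abLetters → w.getD (k + 1) 1 ∈ cLetters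


open Monoid

abbrev L : Type := Fin 3 × Bool

def R : L → L → Prop := fun x y =>
  (x.1 ≠ 2 → y.1 = 2) ∧ ¬(x.1 = 2 ∧ y.1 = 2 ∧ x.2 ≠ y.2)

instance : DecidableEq L := inferInstance
instance (x y : L) : Decidable (R x y) := by unfold R; infer_instance

def Fa : Bool → Type
  | true => Multiplicative (ℤ × ℤ)
  | false => Multiplicative ℤ

instance (b : Bool) : CommGroup (Fa b) := by cases b <;> (unfold Fa; infer_instance)
instance (b : Bool) : DecidableEq (Fa b) := by cases b <;> (unfold Fa; infer_instance)

abbrev H := Monoid.CoprodI Fa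

def nrm : ∀ b, Fa b → ℕ
  | true, m => m.toAdd.1.natAbs + m.toAdd.2.natAbs
  | false, m => m.toAdd.natAbs

lemma nrm_one (b : Bool) : nrm b 1 = 0 := by cases b <;> rfl

lemma nrm_mul_le_aux (m m' : Multiplicative (ℤ × ℤ)) :
    (Multiplicative.toAdd (m * m')).1.natAbs + (Multiplicative.toAdd (m * m')).2.natAbs ≤
      (Multiplicative.toAdd m).1.natAbs + (Multiplicative.toAdd m).2.natAbs +
        ((Multiplicative.toAdd m').1.natAbs + (Multiplicative.toAdd m').2.natAbs) := by
  rw [toAdd_mul, Prod.fst_add, Prod.snd_add]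
  have := Int.natAbs_add_le (Multiplicative.toAdd m).1 (Multiplicative.toAdd m').1
  have := Int.natAbs_add_le (Multiplicative.toAdd m).2 (Multiplicative.toAdd m').2
  omega

lemma nrm_mul_le (b : Bool) (m m' : Fa b) : nrm b (m * m') ≤ nrm b m + nrm b m' := by
  cases b
  · exact Int.natAbs_add_le _ _
  · exact nrm_mul_le_aux m m'

def wlen (W : CoprodI.Word Fa) : ℕ := (W.toList.map fun p => nrm p.1 p.2).sum

noncomputable def nu (g : H) : ℕ := wlen (CoprodI.Word.equiv g)

open Monoid.CoprodI

lemma wlen_cons {i : Bool} (m : Fa i) (W : Word Fa) (h1 : Word.fstIdx W ≠ some i)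
    (h2 : m ≠ 1) : wlen (Word.cons m W h1 h2) = nrm i m + wlen W := by
  simp [wlen, Word.cons]

lemma wlen_rcons {i : Bool} (p : Word.Pair Fa i) :
    wlen (Word.rcons p) = nrm i p.head + wlen p.tail := by
  rw [Word.rcons]
  split_ifs with h
  · simp [h, nrm_one]
  · exact wlen_cons _ _ _ _

lemma wlen_smul_le (i : Bool) (m : Fa i) (W : Word Fa) :
    wlen (CoprodI.of m • W) ≤ nrm i m + wlen W := by
  rw [Word.of_smul_def, wlen_rcons]
  have hW : wlen W = nrm i (Word.equivPair i W).head + wlen (Word.equivPair i W).tail := by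
    conv_lhs => rw [← (Word.equivPair i).symm_apply_apply W, Word.equivPair_symm, wlen_rcons]
  dsimp only
  rw [hW]
  have := nrm_mul_le i m (Word.equivPair i W).head
  omega

lemma equiv_one : Word.equiv (1 : H) = Word.empty := by exact one_smul H Word.empty

lemma equiv_mul (g h : H) : Word.equiv (g * h) = g • Word.equiv h := by exact mul_smul g h (Word.empty : Word Fa)

lemma nu_one : nu 1 = 0 := by rw [nu, equiv_one]; rfl

lemma nu_of_mul_le {i : Bool} (m : Fa i) (g : H) :
    nu (CoprodI.of m * g) ≤ nrm i m + nu g := by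
  rw [nu, equiv_mul]; exact wlen_smul_le i m _

lemma smul_cons_same {i : Bool} (m q : Fa i) (T : Word Fa) (h1 : Word.fstIdx T ≠ some i)
    (hq : q ≠ 1) (hmq : m * q ≠ 1) :
    CoprodI.of m • (Word.cons q T h1 hq) = Word.cons (m * q) T h1 hmq := by
  rw [Word.cons_eq_smul, Word.cons_eq_smul, ← mul_smul, ← map_mul]

lemma exists_tail_word (W : Word Fa) {i : Bool} {q : Fa i} {rest : List (Σ b, Fa b)}
    (hW : W.toList = ⟨i, q⟩ :: rest) :
    ∃ (T : Word Fa) (h1 : Word.fstIdx T ≠ some i) (hq : q ≠ 1),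
      W = Word.cons q T h1 hq ∧ T.toList = rest := by
  have hchain := W.chain_ne
  rw [hW] at hchain
  have hq : q ≠ 1 := W.ne_one ⟨i, q⟩ (by rw [hW]; exact List.mem_cons_self)
  refine ⟨⟨rest, fun l hl => W.ne_one l (by rw [hW]; exact List.mem_cons_of_mem _ hl),
    hchain.tail⟩, ?_, hq, ?_, rfl⟩
  · show (rest.head?.map Sigma.fst) ≠ some i
    cases rest with
    | nil => simp
    | cons r rest' =>
      have : (⟨i, q⟩ : Σ b, Fa b).1 ≠ r.1 := (List.isChain_cons_cons.mp hchain).1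
      simp only [List.head?_cons, Option.map_some]
      intro hcon
      exact this (by simpa using hcon.symm)
  · exact Word.ext hW

/-! ### Homomorphisms out of `Gp` -/

def fA : Fa true := (Multiplicative.ofAdd ((1, 0) : ℤ × ℤ) : Multiplicative (ℤ × ℤ))
def fB : Fa true := (Multiplicative.ofAdd ((0, 1) : ℤ × ℤ) : Multiplicative (ℤ × ℤ))
def fC : Fa false := (Multiplicative.ofAdd (1 : ℤ) : Multiplicative ℤ)

def hof : Fin 3 → H := fun i =>
  match i with
  | 0 => CoprodI.of fA
  | 1 => CoprodI.of fB
  | 2 => CoprodI.of fC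

lemma comm_aux {G : Type*} [CommGroup G] (x y : G) : x * y * x⁻¹ * y⁻¹ = 1 := by
  rw [mul_comm x y]; group

noncomputable def φ : Gp →* H :=
  PresentedGroup.toGroup (f := hof) (by
    intro r hr
    rw [theRels, Set.mem_singleton_iff] at hr
    subst hr
    simp only [map_mul, map_inv, FreeGroup.lift_apply_of]
    show CoprodI.of fA * CoprodI.of fB * (CoprodI.of fA)⁻¹ * (CoprodI.of fB)⁻¹ = 1
    rw [← map_inv, ← map_inv, ← map_mul, ← map_mul, ← map_mul, comm_aux, map_one])

def e3 : Fin 3 → ℤ × ℤ × ℤ := fun i => if i = 0 then (1,0,0) else if i = 1 then (0,1,0) else (0,0,1)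

noncomputable def α3 : Gp →* Multiplicative (ℤ × ℤ × ℤ) :=
  PresentedGroup.toGroup (f := fun i => Multiplicative.ofAdd (e3 i)) (by
    intro r hr
    rw [theRels, Set.mem_singleton_iff] at hr
    subst hr
    simp only [map_mul, map_inv, FreeGroup.lift_apply_of]
    rw [comm_aux])

def gl : L → Gp := fun x => if x.2 then PresentedGroup.of x.1 else (PresentedGroup.of x.1)⁻¹

def vec : L → ℤ × ℤ × ℤ := fun x => if x.2 then e3 x.1 else -e3 x.1

lemma α3_gl (x : L) : α3 (gl x) = Multiplicative.ofAdd (vec x) := by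
  rcases x with ⟨i, s⟩
  cases s <;>
    simp [gl, vec, α3, PresentedGroup.toGroup.of, ← ofAdd_neg]

lemma vec_inj : ∀ x y : L, vec x = vec y → x = y := by decide

lemma gl_inj : Function.Injective gl := by
  intro x y hxy
  have h := congrArg α3 hxy
  rw [α3_gl, α3_gl] at h
  exact vec_inj x y (Multiplicative.ofAdd.injective h)

/-! ### Letters -/

lemma gl_true (i : Fin 3) : gl (i, true) = PresentedGroup.of i := rfl
lemma gl_false (i : Fin 3) : gl (i, false) = (PresentedGroup.of i)⁻¹ := rfl

lemma letters_eq_range : letters = Set.range gl := by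
  ext x
  constructor
  · rintro ⟨i, (rfl | rfl)⟩
    · exact ⟨(i, true), rfl⟩
    · exact ⟨(i, false), rfl⟩
  · rintro ⟨⟨i, s⟩, rfl⟩
    cases s
    · exact ⟨i, Or.inr rfl⟩
    · exact ⟨i, Or.inl rfl⟩

lemma L_ab_iff : ∀ x : L, (∃ i : Fin 2, x = (Fin.castSucc i, true) ∨ x = (Fin.castSucc i, false))
    ↔ x.1 ≠ 2 := by decide

lemma gl_mem_abLetters (x : L) : gl x ∈ abLetters ↔ x.1 ≠ 2 := by
  rw [← L_ab_iff]
  unfold abLetters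
  simp only [Set.mem_setOf_eq]
  constructor
  · rintro ⟨i, (h | h)⟩
    · exact ⟨i, Or.inl (gl_inj (h.trans (gl_true _).symm))⟩
    · exact ⟨i, Or.inr (gl_inj (h.trans (gl_false _).symm))⟩
  · rintro ⟨i, (rfl | rfl)⟩
    · exact ⟨i, Or.inl (gl_true _)⟩
    · exact ⟨i, Or.inr (gl_false _)⟩

lemma gl_mem_cLetters (x : L) : gl x ∈ cLetters ↔ x.1 = 2 := by
  unfold cLetters
  simp only [Set.mem_setOf_eq, ← gl_true, ← gl_false]
  constructor
  · rintro (h | h)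
    · rw [gl_inj (h.trans (gl_true 2).symm)]
    · rw [gl_inj (h.trans (gl_false 2).symm)]
  · intro h
    rcases x with ⟨i, s⟩
    simp only at h
    subst h
    cases s
    · exact Or.inr rfl
    · exact Or.inl rfl

/-! ### Syllables -/

def sylAB (x : L) : Fa true :=
  Multiplicative.ofAdd ((if x.1 = 0 then (if x.2 then 1 else -1) else 0,
    if x.1 = 1 then (if x.2 then 1 else -1) else 0) : ℤ × ℤ)

def sylC (s : Bool) : Fa false :=
  (Multiplicative.ofAdd (if s then (1 : ℤ) else -1) : Multiplicative ℤ)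

def η (x : L) : H := if h : x.1 = 2 then CoprodI.of (sylC x.2) else CoprodI.of (sylAB x)

lemma η_of_two (x : L) (h : x.1 = 2) : η x = CoprodI.of (sylC x.2) := by rw [η, dif_pos h]
lemma η_of_ne_two (x : L) (h : x.1 ≠ 2) : η x = CoprodI.of (sylAB x) := by rw [η, dif_neg h]

lemma φ_of (i : Fin 3) : φ (PresentedGroup.of i) = hof i := PresentedGroup.toGroup.of _

lemma fin3_cases (i : Fin 3) : i = 0 ∨ i = 1 ∨ i = 2 := by revert i; decide

lemma hof_eq (i : Fin 3) : hof i = η (i, true) := by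
  rcases fin3_cases i with rfl | rfl | rfl
  · rw [η_of_ne_two _ (by decide)]
    exact congrArg CoprodI.of (by decide : fA = sylAB (0, true))
  · rw [η_of_ne_two _ (by decide)]
    exact congrArg CoprodI.of (by decide : fB = sylAB (1, true))
  · rw [η_of_two _ rfl]
    exact congrArg CoprodI.of (by decide : fC = sylC true)

lemma hof_inv_eq (i : Fin 3) : (hof i)⁻¹ = η (i, false) := by
  rcases fin3_cases i with rfl | rfl | rfl
  · rw [η_of_ne_two _ (by decide)]
    show (CoprodI.of fA)⁻¹ = _
    rw [← map_inv]
    exact congrArg CoprodI.of (by decide : fA⁻¹ = sylAB (0, false))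
  · rw [η_of_ne_two _ (by decide)]
    show (CoprodI.of fB)⁻¹ = _
    rw [← map_inv]
    exact congrArg CoprodI.of (by decide : fB⁻¹ = sylAB (1, false))
  · rw [η_of_two _ rfl]
    show (CoprodI.of fC)⁻¹ = _
    rw [← map_inv]
    exact congrArg CoprodI.of (by decide : fC⁻¹ = sylC false)

lemma φ_gl (x : L) : φ (gl x) = η x := by
  rcases x with ⟨i, s⟩
  cases s
  · show φ ((PresentedGroup.of i)⁻¹) = η (i, false)
    rw [map_inv, φ_of, hof_inv_eq]
  · show φ (PresentedGroup.of i) = η (i, true)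
    rw [φ_of, hof_eq]

lemma sylAB_ne_one (x : L) (h : x.1 ≠ 2) : sylAB x ≠ 1 := by
  rcases x with ⟨i, s⟩
  fin_cases i <;> cases s <;> first | (exact absurd rfl h) | decide

lemma nrm_sylAB (x : L) (h : x.1 ≠ 2) : nrm true (sylAB x) = 1 := by
  rcases x with ⟨i, s⟩
  fin_cases i <;> cases s <;> first | (exact absurd rfl h) | decide

lemma sylC_ne_one (s : Bool) : sylC s ≠ 1 := by cases s <;> decide

lemma nrm_sylC (s : Bool) : nrm false (sylC s) = 1 := by cases s <;> decide

/-! ### The main normal form computation -/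

def Hp (l : List L) : H := (l.map η).prod

lemma Hp_nil : Hp [] = 1 := rfl
lemma Hp_cons (x : L) (t : List L) : Hp (x :: t) = η x * Hp t := by simp [Hp]

def mkC (k : ℤ) : Fa false := (Multiplicative.ofAdd k : Multiplicative ℤ)

def hc (x : L) (W : Word Fa) : Prop :=
  if x.1 = 2 then
    ∃ k : ℤ, k ≠ 0 ∧
      W.toList.head? = some ⟨false, mkC k⟩ ∧
      (0 < k ↔ x.2 = true)
  else W.toList.head? = some ⟨true, sylAB x⟩

lemma step_new {i : Bool} (m : Fa i) (W : Word Fa) (h1 : W.fstIdx ≠ some i) (hm : m ≠ 1) :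
    (CoprodI.of m • W).toList = ⟨i, m⟩ :: W.toList ∧
      wlen (CoprodI.of m • W) = nrm i m + wlen W := by
  rw [← Word.cons_eq_smul (h1 := h1) (h2 := hm)]
  exact ⟨rfl, wlen_cons _ _ _ _⟩

lemma step_merge {i : Bool} (m : Fa i) (W : Word Fa) {q : Fa i} {rest : List (Σ b, Fa b)}
    (hW : W.toList = ⟨i, q⟩ :: rest) (hmq : m * q ≠ 1) :
    (CoprodI.of m • W).toList = ⟨i, m * q⟩ :: rest ∧
      wlen (CoprodI.of m • W) + nrm i q = nrm i (m * q) + wlen W := by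
  obtain ⟨T, h1, hq, hWc, hT⟩ := exists_tail_word W hW
  rw [hWc, smul_cons_same m q T h1 hq hmq]
  refine ⟨?_, ?_⟩
  · show (⟨i, m * q⟩ : Σ b, Fa b) :: T.toList = _
    rw [hT]
  · rw [wlen_cons, wlen_cons]
    omega

lemma sylC_mul (s : Bool) (k : ℤ) :
    sylC s * mkC k = mkC ((if s then 1 else -1) + k) := by
  cases s <;> rfl

lemma sylC_eq (s : Bool) : sylC s = mkC (if s then (1:ℤ) else -1) := rfl

lemma nrm_ofAdd (k : ℤ) : nrm false (mkC k) = k.natAbs := rfl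

lemma mkC_inj : Function.Injective mkC := fun a b hab => by
  have : Multiplicative.toAdd (Multiplicative.ofAdd a) =
      Multiplicative.toAdd (Multiplicative.ofAdd b) := congrArg (fun z : Multiplicative ℤ =>
        Multiplicative.toAdd z) hab
  simpa using this

lemma ofAdd_ne_one {k : ℤ} (hk : k ≠ 0) : mkC k ≠ (1 : Fa false) := fun h =>
  hk (mkC_inj (h.trans (rfl : (1 : Fa false) = mkC 0)))

lemma fstIdx_of_head {W : Word Fa} {b : Bool} {v : Fa b} {rest : List (Σ b, Fa b)}
    (h : W.toList = ⟨b, v⟩ :: rest) : W.fstIdx = some b := by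
  rw [Word.fstIdx, h]; rfl

theorem main : ∀ l : List L, l.Chain' R →
    wlen (Word.equiv (Hp l)) = l.length ∧
      ∀ x t, l = x :: t → hc x (Word.equiv (Hp l)) := by
  intro l
  induction l with
  | nil =>
    intro _
    refine ⟨?_, ?_⟩
    · rw [Hp_nil, equiv_one]; rfl
    · rintro x t ⟨⟩
  | cons x t ih =>
    intro hl
    have hRt : t.Chain' R := hl.tail
    obtain ⟨ihlen, ihhd⟩ := ih hRt
    have hEq : Word.equiv (Hp (x :: t)) = η x • Word.equiv (Hp t) := by
      rw [Hp_cons, equiv_mul]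
    rcases ht : t with _ | ⟨y, t'⟩
    · -- t = []
      subst ht
      have hW : Word.equiv (Hp ([] : List L)) = Word.empty := by rw [Hp_nil, equiv_one]
      have hfst : (Word.equiv (Hp ([] : List L))).fstIdx = none := by
        rw [hW]; rfl
      by_cases hx2 : x.1 = 2
      · rw [η_of_two x hx2] at hEq
        obtain ⟨hlist, hwl⟩ := step_new (sylC x.2) _ (by rw [hfst]; simp) (sylC_ne_one x.2)
        refine ⟨?_, ?_⟩
        · rw [hEq, hwl, nrm_sylC, hW]
          rfl
        · intro x' t'' hx'
          obtain ⟨rfl, rfl⟩ := List.cons.inj hx'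
          rw [hc, if_pos hx2, hEq]
          refine ⟨if x.2 then 1 else -1, by cases x.2 <;> simp, ?_, by cases x.2 <;> simp⟩
          rw [hlist, sylC_eq]
          rfl
      · rw [η_of_ne_two x hx2] at hEq
        obtain ⟨hlist, hwl⟩ := step_new (sylAB x) _ (by rw [hfst]; simp) (sylAB_ne_one x hx2)
        refine ⟨?_, ?_⟩
        · rw [hEq, hwl, nrm_sylAB x hx2, hW]
          rfl
        · intro x' t'' hx'
          obtain ⟨rfl, rfl⟩ := List.cons.inj hx'
          rw [hc, if_neg hx2, hEq, hlist]
          rfl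
    · -- t = y :: t'
      subst ht
      have hhd := ihhd y t' rfl
      have hRxy : R x y := (List.isChain_cons_cons.mp hl).1
      set W := Word.equiv (Hp (y :: t')) with hWdef
      by_cases hy2 : y.1 = 2
      · rw [hc, if_pos hy2] at hhd
        obtain ⟨k, hk0, hhead, hsgn⟩ := hhd
        obtain ⟨rest, hrest⟩ : ∃ rest, W.toList =
            ⟨false, mkC k⟩ :: rest := by
          rcases hL : W.toList with _ | ⟨a, l'⟩
          · rw [hL] at hhead; exact absurd hhead (by simp)
          · rw [hL] at hhead
            refine ⟨l', ?_⟩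
            congr 1
            exact Option.some.inj hhead
        by_cases hx2 : x.1 = 2
        · -- merge case
          have hss : x.2 = y.2 := by
            rcases hRxy with ⟨-, h2⟩
            by_contra hne
            exact h2 ⟨hx2, hy2, hne⟩
          rw [η_of_two x hx2] at hEq
          have hkey : (if x.2 then (1:ℤ) else -1) + k ≠ 0 ∧
              ((if x.2 then (1:ℤ) else -1) + k).natAbs = 1 + k.natAbs ∧
              (0 < (if x.2 then (1:ℤ) else -1) + k ↔ x.2 = true) := by
            rw [hss]
            cases hyb : y.2 <;> simp_all <;> omega
          have hmq : sylC x.2 * mkC k ≠ 1 := by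
            rw [sylC_mul]
            exact ofAdd_ne_one hkey.1
          obtain ⟨hlist, hwl⟩ := step_merge (sylC x.2) W hrest hmq
          refine ⟨?_, ?_⟩
          · rw [hEq]
            have h1 : nrm false (sylC x.2 * mkC k) =
                1 + k.natAbs := by rw [sylC_mul, nrm_ofAdd]; exact hkey.2.1
            have h2 : nrm false (mkC k) = k.natAbs :=
              nrm_ofAdd k
            simp only [List.length_cons] at ihlen ⊢
            omega
          · intro x' t'' hx'
            obtain ⟨rfl, rfl⟩ := List.cons.inj hx'
            rw [hc, if_pos hx2, hEq]
            refine ⟨(if x.2 then (1:ℤ) else -1) + k, hkey.1, ?_, hkey.2.2⟩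
            rw [hlist, sylC_mul]
            rfl
        · -- prepend ab-letter over c-head
          rw [η_of_ne_two x hx2] at hEq
          obtain ⟨hlist, hwl⟩ := step_new (sylAB x) W
            (by rw [fstIdx_of_head hrest]; simp) (sylAB_ne_one x hx2)
          refine ⟨?_, ?_⟩
          · rw [hEq, hwl, nrm_sylAB x hx2, ihlen]
            simp only [List.length_cons]
            omega
          · intro x' t'' hx'
            obtain ⟨rfl, rfl⟩ := List.cons.inj hx'
            rw [hc, if_neg hx2, hEq, hlist]
            rfl
      · -- y is an ab-letter; x must be a c-letter
        rw [hc, if_neg hy2] at hhd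
        have hx2 : x.1 = 2 := by
          by_contra hx2
          exact hy2 (hRxy.1 hx2)
        obtain ⟨rest, hrest⟩ : ∃ rest, W.toList = ⟨true, sylAB y⟩ :: rest := by
          rcases hL : W.toList with _ | ⟨a, l'⟩
          · rw [hL] at hhd; exact absurd hhd (by simp)
          · rw [hL] at hhd
            refine ⟨l', ?_⟩
            congr 1
            exact Option.some.inj hhd
        rw [η_of_two x hx2] at hEq
        obtain ⟨hlist, hwl⟩ := step_new (sylC x.2) W
          (by rw [fstIdx_of_head hrest]; simp) (sylC_ne_one x.2)
        refine ⟨?_, ?_⟩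
        · rw [hEq, hwl, nrm_sylC, ihlen]
          simp only [List.length_cons]
          omega
        · intro x' t'' hx'
          obtain ⟨rfl, rfl⟩ := List.cons.inj hx'
          rw [hc, if_pos hx2, hEq]
          refine ⟨if x.2 then 1 else -1, by cases x.2 <;> simp, ?_, by cases x.2 <;> simp⟩
          rw [hlist, sylC_eq]
          rfl

/-! ### Word length characterization -/

noncomputable def nuG (g : Gp) : ℕ := nu (φ g)

lemma nuG_letter_mul (x : Gp) (hx : x ∈ letters) (g : Gp) : nuG (x * g) ≤ 1 + nuG g := by
  rw [letters_eq_range] at hx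
  obtain ⟨y, rfl⟩ := hx
  rw [nuG, map_mul, φ_gl]
  by_cases hy : y.1 = 2
  · rw [η_of_two y hy]
    have := nu_of_mul_le (sylC y.2) (φ g)
    rwa [nrm_sylC] at this
  · rw [η_of_ne_two y hy]
    have := nu_of_mul_le (sylAB y) (φ g)
    rwa [nrm_sylAB y hy] at this

lemma nuG_le_length (w : List Gp) (hw : ∀ x ∈ w, x ∈ letters) : nuG w.prod ≤ w.length := by
  induction w with
  | nil =>
    simp only [List.prod_nil, List.length_nil]
    rw [nuG, map_one]
    simp [nu_one]
  | cons x t ih =>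
    rw [List.prod_cons, List.length_cons]
    have h1 := nuG_letter_mul x (hw x (List.mem_cons_self)) t.prod
    have h2 := ih (fun z hz => hw z (List.mem_cons_of_mem _ hz))
    omega

lemma φ_prod_map_gl (l : List L) : φ ((l.map gl).prod) = Hp l := by
  rw [MonoidHom.map_list_prod, List.map_map, Hp]
  congr 1
  exact List.map_congr_left fun x _ => φ_gl x

lemma map_gl_letters (l : List L) : ∀ x ∈ l.map gl, x ∈ letters := by
  intro x hx
  rw [letters_eq_range]
  obtain ⟨y, -, rfl⟩ := List.mem_map.mp hx
  exact ⟨y, rfl⟩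

lemma wl_map_gl (l : List L) (hl : l.Chain' R) : wl ((l.map gl).prod) = l.length := by
  have hmem : (l.map gl).length ∈
      {n | ∃ w : List Gp, (∀ x ∈ w, x ∈ letters) ∧ w.prod = (l.map gl).prod ∧ w.length = n} :=
    ⟨l.map gl, map_gl_letters l, rfl, rfl⟩
  have hnu : nuG ((l.map gl).prod) = l.length := by
    rw [nuG, φ_prod_map_gl, nu]
    exact (main l hl).1
  apply le_antisymm
  · rw [wl]
    have := Nat.sInf_le hmem
    simpa using this
  · rw [wl]
    apply le_csInf ⟨_, hmem⟩
    rintro n ⟨w, hw, hprod, rfl⟩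
    calc l.length = nuG w.prod := by rw [hprod, hnu]
    _ ≤ w.length := nuG_le_length w hw

lemma cancel_short (l : List L) (i : ℕ) (h : i + 1 < l.length)
    (hu : (l.get ⟨i, by omega⟩).1 = 2) (hv : (l.get ⟨i+1, h⟩).1 = 2)
    (hs : (l.get ⟨i, by omega⟩).2 ≠ (l.get ⟨i+1, h⟩).2) :
    wl ((l.map gl).prod) ≠ (l.map gl).length := by
  set w := l.map gl with hwdef
  have hlen : w.length = l.length := by simp [hwdef]
  have hiw : i + 1 < w.length := by omega
  have hpair : w.get ⟨i, by omega⟩ * w.get ⟨i+1, hiw⟩ = 1 := by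
    have e1 : w.get ⟨i, by omega⟩ = gl (l.get ⟨i, by omega⟩) := by simp [hwdef]
    have e2 : w.get ⟨i+1, hiw⟩ = gl (l.get ⟨i+1, h⟩) := by simp [hwdef]
    rw [e1, e2]
    rcases hb : (l.get ⟨i, by omega⟩).2
    · have hb2 : (l.get ⟨i+1, h⟩).2 = true := by
        revert hs; rw [hb]; cases (l.get ⟨i+1, h⟩).2 <;> simp
      rw [show l.get ⟨i, by omega⟩ = ((2 : Fin 3), false) from Prod.ext hu hb,
        show l.get ⟨i+1, h⟩ = ((2 : Fin 3), true) from Prod.ext hv hb2]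
      rw [gl_false, gl_true]
      group
    · have hb2 : (l.get ⟨i+1, h⟩).2 = false := by
        revert hs; rw [hb]; cases (l.get ⟨i+1, h⟩).2 <;> simp
      rw [show l.get ⟨i, by omega⟩ = ((2 : Fin 3), true) from Prod.ext hu hb,
        show l.get ⟨i+1, h⟩ = ((2 : Fin 3), false) from Prod.ext hv hb2]
      rw [gl_false, gl_true]
      group
  have hdecomp : w = w.take i ++ w[i] :: w[i+1] :: w.drop (i+2) := by
    conv_lhs => rw [← List.take_append_drop i w,
      List.drop_eq_getElem_cons (show i < w.length by omega),
      List.drop_eq_getElem_cons (show i+1 < w.length by omega)]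
  have hpair' : w[i]'(by omega) * w[i+1]'(by omega) = 1 := hpair
  have hprod : (w.take i ++ w.drop (i+2)).prod = w.prod := by
    conv_rhs => rw [hdecomp]
    rw [List.prod_append, List.prod_append, List.prod_cons, List.prod_cons, ← mul_assoc,
      ← mul_assoc, mul_assoc _ (w[i]'(by omega)), hpair', mul_one]
  have hshort : (w.take i ++ w.drop (i+2)).length = w.length - 2 := by
    rw [List.length_append, List.length_take, List.length_drop]
    omega
  have hle : wl w.prod ≤ w.length - 2 := by
    rw [wl]
    refine Nat.sInf_le ⟨w.take i ++ w.drop (i+2), ?_, hprod, hshort⟩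
    intro x hx
    rcases List.mem_append.mp hx with hx | hx
    · exact map_gl_letters l x (List.take_subset _ _ hx)
    · exact map_gl_letters l x (List.drop_subset _ _ hx)
  omega

/-! ### Characterization of the counted set -/

lemma getD_map_gl (l : List L) (k : ℕ) (hk : k < l.length) :
    (l.map gl).getD k 1 = gl (l.get ⟨k, hk⟩) := by
  rw [List.getD_eq_getElem _ _ (by simpa using hk)]
  simp

lemma abc_of_chain (l : List L) (hl : l.Chain' R) : ABFollowedByC (l.map gl) := by
  intro k hk hab
  have hk' : k + 1 < l.length := by simpa using hk
  rw [getD_map_gl l k (by omega)] at hab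
  rw [getD_map_gl l (k+1) hk', gl_mem_cLetters]
  rw [gl_mem_abLetters] at hab
  have hR := List.isChain_iff_getElem.mp hl k (by omega)
  exact hR.1 hab

lemma geo_of_chain (l : List L) (hl : l.Chain' R) : IsGeodesicWord (l.map gl) :=
  ⟨map_gl_letters l, by rw [wl_map_gl l hl]; simp⟩

lemma chain_of_props (l : List L) (hgeo : IsGeodesicWord (l.map gl))
    (hab : ABFollowedByC (l.map gl)) : l.Chain' R := by
  rw [List.Chain', List.isChain_iff_getElem]
  intro i hi
  have hi' : i + 1 < l.length := by omega
  by_cases hA : (l.get ⟨i, by omega⟩).1 ≠ 2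
  · have h2 := hab i (by simpa using hi')
      (by rw [getD_map_gl l i (by omega), gl_mem_abLetters]; exact hA)
    rw [getD_map_gl l (i+1) hi', gl_mem_cLetters] at h2
    exact ⟨fun _ => h2, fun hcon => hA hcon.1⟩
  · push_neg at hA
    refine ⟨fun hcon => absurd hA hcon, ?_⟩
    rintro ⟨h1, h2, h3⟩
    exact cancel_short l i hi' hA h2 h3 hgeo.2

lemma exists_preimage (w : List Gp) (hw : ∀ x ∈ w, x ∈ letters) :
    ∃ l : List L, w = l.map gl := by
  induction w with
  | nil => exact ⟨[], rfl⟩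
  | cons x t ih =>
    obtain ⟨l, rfl⟩ := ih (fun z hz => hw z (List.mem_cons_of_mem _ hz))
    have hx := hw x (List.mem_cons_self)
    rw [letters_eq_range] at hx
    obtain ⟨y, rfl⟩ := hx
    exact ⟨y :: l, rfl⟩

lemma set_eq (n : ℕ) :
    {w : List Gp | IsGeodesicWord w ∧ ABFollowedByC w ∧ w.length = n} =
      (fun l : List L => l.map gl) '' {l | l.Chain' R ∧ l.length = n} := by
  ext w
  constructor
  · rintro ⟨hgeo, hab, hlen⟩
    obtain ⟨l, rfl⟩ := exists_preimage w hgeo.1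
    exact ⟨l, ⟨chain_of_props l hgeo hab, by simpa using hlen⟩, rfl⟩
  · rintro ⟨l, ⟨hl, hlen⟩, rfl⟩
    exact ⟨geo_of_chain l hl, abc_of_chain l hl, by simpa using hlen⟩

/-! ### Counting -/

abbrev ChT (x : L) (n : ℕ) : Type := {l : List L // (x :: l).Chain' R ∧ l.length = n}
abbrev TT (n : ℕ) : Type := {l : List L // l.Chain' R ∧ l.length = n}

lemma finite_aux (P : List L → Prop) (n : ℕ) : Finite {l : List L // P l ∧ l.length = n} := by
  apply Finite.of_injective (fun l : {l : List L // P l ∧ l.length = n} =>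
    (fun i => l.1.get ⟨i.1, by rw [l.2.2]; exact i.2⟩ : Fin n → L))
  intro a b hab
  apply Subtype.ext
  apply List.ext_get (by rw [a.2.2, b.2.2])
  intro i h1 h2
  have := congrFun hab ⟨i, by rw [← a.2.2]; exact h1⟩
  simpa using this

instance (x : L) (n : ℕ) : Finite (ChT x n) := finite_aux _ n
instance (n : ℕ) : Finite (TT n) := finite_aux _ n

lemma h_card_eq (n : ℕ) :
    Set.ncard {w : List Gp | IsGeodesicWord w ∧ ABFollowedByC w ∧ w.length = n} =
      Nat.card (TT n) := by
  rw [set_eq n, Set.ncard_image_of_injective _ (List.map_injective_iff.mpr gl_inj),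
    ← Nat.card_coe_set_eq]
  rfl

lemma nat_card_sigma {ι : Type} [Fintype ι] (f : ι → Type) [∀ i, Finite (f i)] :
    Nat.card (Σ i, f i) = ∑ i, Nat.card (f i) := by
  letI : ∀ i, Fintype (f i) := fun i => Fintype.ofFinite _
  simp [Nat.card_eq_fintype_card, Fintype.card_sigma]

lemma card_ChT_zero (x : L) : Nat.card (ChT x 0) = 1 := by
  rw [Nat.card_eq_one_iff_unique]
  constructor
  · constructor
    intro ⟨l, h1, h2⟩ ⟨l', h1', h2'⟩
    have : l = [] := List.length_eq_zero_iff.mp h2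
    have : l' = [] := List.length_eq_zero_iff.mp h2'
    subst_vars
    rfl
  · exact ⟨⟨[], by simp [List.Chain'], rfl⟩⟩

lemma card_TT_zero : Nat.card (TT 0) = 1 := by
  rw [Nat.card_eq_one_iff_unique]
  constructor
  · constructor
    intro ⟨l, h1, h2⟩ ⟨l', h1', h2'⟩
    have : l = [] := List.length_eq_zero_iff.mp h2
    have : l' = [] := List.length_eq_zero_iff.mp h2'
    subst_vars
    rfl
  · exact ⟨⟨[], by simp [List.Chain'], rfl⟩⟩

lemma card_ChT_succ (x : L) (n : ℕ) :
    Nat.card (ChT x (n+1)) = ∑ y : L, if R x y then Nat.card (ChT y n) else 0 := by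
  have hbij : Function.Bijective
      (fun p : Σ y : {y : L // R x y}, ChT y.1 n =>
        (⟨p.1.1 :: p.2.1, List.isChain_cons_cons.mpr ⟨p.1.2, p.2.2.1⟩,
          by simp [p.2.2.2]⟩ : ChT x (n+1))) := by
    constructor
    · rintro ⟨⟨y, hy⟩, ⟨l, hl⟩⟩ ⟨⟨y', hy'⟩, ⟨l', hl'⟩⟩ hp
      simp only [Subtype.mk.injEq, List.cons.injEq] at hp
      obtain ⟨rfl, rfl⟩ := hp
      rfl
    · rintro ⟨l, h1, h2⟩
      rcases l with _ | ⟨y, t⟩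
      · simp at h2
      · refine ⟨⟨⟨y, (List.isChain_cons_cons.mp h1).1⟩, ⟨t, (List.isChain_cons_cons.mp h1).2,
          by simpa using h2⟩⟩, rfl⟩
  rw [← Nat.card_eq_of_bijective _ hbij, nat_card_sigma]
  rw [← Finset.sum_subtype (Finset.univ.filter (fun y => R x y))
    (fun y => by simp) (fun y => Nat.card (ChT y n))]
  rw [Finset.sum_filter]

lemma card_TT_succ (n : ℕ) :
    Nat.card (TT (n+1)) = ∑ y : L, Nat.card (ChT y n) := by
  have hbij : Function.Bijective
      (fun p : Σ y : L, ChT y n =>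
        (⟨p.1 :: p.2.1, p.2.2.1, by simp [p.2.2.2]⟩ : TT (n+1))) := by
    constructor
    · rintro ⟨y, ⟨l, hl⟩⟩ ⟨y', ⟨l', hl'⟩⟩ hp
      simp only [Subtype.mk.injEq, List.cons.injEq] at hp
      obtain ⟨rfl, rfl⟩ := hp
      rfl
    · rintro ⟨l, h1, h2⟩
      rcases l with _ | ⟨y, t⟩
      · simp at h2
      · exact ⟨⟨y, ⟨t, h1, by simpa using h2⟩⟩, rfl⟩
  rw [← Nat.card_eq_of_bijective _ hbij, nat_card_sigma]

lemma card_ChT_swap (u v : L)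
    (hpres : ∀ a b : L, R (Equiv.swap u v a) (Equiv.swap u v b) ↔ R a b) (n : ℕ)
    (hx : Equiv.swap u v u = v) :
    Nat.card (ChT u n) = Nat.card (ChT v n) := by
  apply Nat.card_congr
  have key : ∀ (w : L) (l : List L), (w :: l).Chain' R →
      (Equiv.swap u v w :: l.map (Equiv.swap u v)).Chain' R := by
    intro w l hl
    have : (Equiv.swap u v w :: l.map (Equiv.swap u v)) = (w :: l).map (Equiv.swap u v) := rfl
    rw [this, List.Chain', List.isChain_map]
    exact hl.imp (fun a b hab => (hpres a b).mpr hab)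
  refine ⟨fun p => ⟨p.1.map (Equiv.swap u v), ?_, by simp [p.2.2]⟩,
    fun p => ⟨p.1.map (Equiv.swap u v), ?_, by simp [p.2.2]⟩, ?_, ?_⟩
  · have := key u p.1 p.2.1
    rwa [hx] at this
  · have := key v p.1 p.2.1
    rwa [show Equiv.swap u v v = u from Equiv.swap_apply_right u v] at this
  · intro p
    apply Subtype.ext
    show (p.1.map _).map _ = p.1
    rw [List.map_map,
      show (⇑(Equiv.swap u v) ∘ ⇑(Equiv.swap u v)) = id from
        funext fun z => Equiv.swap_apply_self u v z, List.map_id]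
  · intro p
    apply Subtype.ext
    show (p.1.map _).map _ = p.1
    rw [List.map_map,
      show (⇑(Equiv.swap u v) ∘ ⇑(Equiv.swap u v)) = id from
        funext fun z => Equiv.swap_apply_self u v z, List.map_id]

noncomputable def An (n : ℕ) : ℕ := Nat.card (ChT (0, true) n)
noncomputable def Cn (n : ℕ) : ℕ := Nat.card (ChT (2, true) n)

lemma card_eval (n : ℕ) (y : L) : Nat.card (ChT y n) = if y.1 = 2 then Cn n else An n := by
  rcases y with ⟨i, s⟩
  rcases fin3_cases i with rfl | rfl | rfl <;> cases s
  · rw [if_neg (by decide)]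
    exact card_ChT_swap (0, false) (0, true) (by decide) n (Equiv.swap_apply_left _ _)
  · rw [if_neg (by decide)]; rfl
  · rw [if_neg (by decide)]
    exact card_ChT_swap (1, false) (0, true) (by decide) n (Equiv.swap_apply_left _ _)
  · rw [if_neg (by decide)]
    exact card_ChT_swap (1, true) (0, true) (by decide) n (Equiv.swap_apply_left _ _)
  · rw [if_pos rfl]
    exact card_ChT_swap (2, false) (2, true) (by decide) n (Equiv.swap_apply_left _ _)
  · rw [if_pos rfl]; rfl

lemma An_zero : An 0 = 1 := card_ChT_zero _
lemma Cn_zero : Cn 0 = 1 := card_ChT_zero _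

lemma An_succ (n : ℕ) : An (n+1) = 2 * Cn n := by
  rw [An, card_ChT_succ]
  rw [Finset.sum_congr rfl (fun y _ => by rw [card_eval n y])]
  rw [Fintype.sum_prod_type, Fin.sum_univ_three]
  simp only [Fintype.sum_bool]
  rw [if_neg (by decide : ¬ R (0,true) ((0:Fin 3), true)),
    if_neg (by decide : ¬ R (0,true) ((0:Fin 3), false)),
    if_neg (by decide : ¬ R (0,true) ((1:Fin 3), true)),
    if_neg (by decide : ¬ R (0,true) ((1:Fin 3), false)),
    if_pos (by decide : R (0,true) ((2:Fin 3), true)),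
    if_pos (by decide : R (0,true) ((2:Fin 3), false))]
  simp only [show ((0:Fin 3) = 2) = False from eq_false (by decide),
    show ((1:Fin 3) = 2) = False from eq_false (by decide),
    show ((2:Fin 3) = 2) = True from eq_true rfl, if_true, if_false]
  ring

lemma Cn_succ (n : ℕ) : Cn (n+1) = 4 * An n + Cn n := by
  rw [Cn, card_ChT_succ]
  rw [Finset.sum_congr rfl (fun y _ => by rw [card_eval n y])]
  rw [Fintype.sum_prod_type, Fin.sum_univ_three]
  simp only [Fintype.sum_bool]
  rw [if_pos (by decide : R (2,true) ((0:Fin 3), true)),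
    if_pos (by decide : R (2,true) ((0:Fin 3), false)),
    if_pos (by decide : R (2,true) ((1:Fin 3), true)),
    if_pos (by decide : R (2,true) ((1:Fin 3), false)),
    if_pos (by decide : R (2,true) ((2:Fin 3), true)),
    if_neg (by decide : ¬ R (2,true) ((2:Fin 3), false))]
  simp only [show ((0:Fin 3) = 2) = False from eq_false (by decide),
    show ((1:Fin 3) = 2) = False from eq_false (by decide),
    show ((2:Fin 3) = 2) = True from eq_true rfl, if_true, if_false]
  ring

lemma card_TT_succ' (n : ℕ) : Nat.card (TT (n+1)) = 4 * An n + 2 * Cn n := by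
  rw [card_TT_succ]
  rw [Finset.sum_congr rfl (fun y _ => by rw [card_eval n y])]
  rw [Fintype.sum_prod_type, Fin.sum_univ_three]
  simp only [Fintype.sum_bool]
  simp only [show ((0:Fin 3) = 2) = False from eq_false (by decide),
    show ((1:Fin 3) = 2) = False from eq_false (by decide),
    show ((2:Fin 3) = 2) = True from eq_true rfl, if_true, if_false]
  ring

/-- the number `h_n` of geodesic words of length `n` over the
six-letter alphabet of `G = ⟨a,b,c ∣ aba⁻¹b⁻¹⟩` in which every non-final
letter from `{a, a⁻¹, b, b⁻¹}` is immediately followed by `c` or `c⁻¹`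
satisfies `h₀ = 1`, `h₁ = 6`, `h₂ = 18`, and `h_n = h_{n-1} + 8 h_{n-2}` for
`n ≥ 3`. -/
theorem geodesic_growth_one_contracting (h : ℕ → ℕ)
    (hh : ∀ n, h n = Set.ncard
      {w : List Gp | IsGeodesicWord w ∧ ABFollowedByC w ∧ w.length = n}) :
    h 0 = 1 ∧ h 1 = 6 ∧ h 2 = 18 ∧
      ∀ n, 3 ≤ n → h n = h (n - 1) + 8 * h (n - 2) := by
  have hT : ∀ n, h n = Nat.card (TT n) := fun n => (hh n).trans (h_card_eq n)
  refine ⟨?_, ?_, ?_, ?_⟩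
  · rw [hT 0, card_TT_zero]
  · rw [hT 1, card_TT_succ' 0, An_zero, Cn_zero]
  · rw [hT 2, card_TT_succ' 1, An_succ 0, Cn_succ 0, An_zero, Cn_zero]
  · intro n hn
    obtain ⟨m, rfl⟩ : ∃ m, n = m + 3 := ⟨n - 3, by omega⟩
    have e1 : m + 3 - 1 = m + 2 := by omega
    have e2 : m + 3 - 2 = m + 1 := by omega
    rw [e1, e2, hT (m+3), hT (m+2), hT (m+1), card_TT_succ' (m+2), card_TT_succ' (m+1),
      card_TT_succ' m, An_succ (m+1), Cn_succ (m+1), An_succ m, Cn_succ m]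
    ring
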